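/- In characteristic 2, the universal acting Hopf algebra C_{k[C₂],k[C₂]} = (k[x]/(x²−1))* contains the primitive element x* (dual to x), i.e., δ(x*) = 1̂ ⊗ x* + x* ⊗ 1̂ where 1̂ = 1* + x* is the unit grouplike; consequently a ↦ ψ(x* ⊗ a) is a nonzero derivation of the Frobenius algebra k[C₂] that is not induced by any algebra automorphism. -/

import Mathlib

open TensorProduct

section Char2

variable {k : Type*} [Field k]

/-- The cyclic group of order 2. -/
abbrev C2 : Type := Multiplicative (ZMod 2)

/-- The generator of `C2`. -/
def gC2 : C2 := Multiplicative.ofAdd (1 : ZMod 2)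

/-- The dual of the universal coacting Hopf algebra `k[x]/(x²−1)` of `k[C₂]`, modelled as
`k × k` with basis `1* = (1,0)` and `x* = (0,1)`. -/
abbrev DualC : Type _ := k × k

/-- The basis element `1*`. -/
def oneStar : DualC (k := k) := ((1 : k), (0 : k))
/-- The basis element `x*`. -/
def xStar : DualC (k := k) := ((0 : k), (1 : k))

/-- The comultiplication on the dual Hopf algebra:
`δ(1*) = 1* ⊗ 1* + x* ⊗ x*`, `δ(x*) = x* ⊗ 1* + 1* ⊗ x*`. -/
noncomputable def deltaDual :
    DualC (k := k) →ₗ[k] DualC (k := k) ⊗[k] DualC (k := k) :=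
  (LinearMap.toSpanSingleton k (DualC (k := k) ⊗[k] DualC (k := k))
      (oneStar ⊗ₜ[k] oneStar + xStar ⊗ₜ[k] xStar)) ∘ₗ LinearMap.fst k k k
  + (LinearMap.toSpanSingleton k (DualC (k := k) ⊗[k] DualC (k := k))
      (xStar ⊗ₜ[k] oneStar + oneStar ⊗ₜ[k] xStar)) ∘ₗ LinearMap.snd k k k

/-- The universal action `ψ : C ⊗ k[C₂] → k[C₂]`:
`ψ(1* ⊗ e) = e`, `ψ(x* ⊗ g) = g`, and `0` on the other basis tensors. -/
noncomputable def psiAct :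
    DualC (k := k) →ₗ[k] MonoidAlgebra k C2 →ₗ[k] MonoidAlgebra k C2 :=
  (LinearMap.toSpanSingleton k (MonoidAlgebra k C2 →ₗ[k] MonoidAlgebra k C2)
      ((MonoidAlgebra.lsingle (1 : C2)) ∘ₗ ((Finsupp.lapply (1 : C2)) ∘ₗ (MonoidAlgebra.coeffLinearEquiv k).toLinearMap))) ∘ₗ LinearMap.fst k k k
  + (LinearMap.toSpanSingleton k (MonoidAlgebra k C2 →ₗ[k] MonoidAlgebra k C2)
      ((MonoidAlgebra.lsingle gC2) ∘ₗ ((Finsupp.lapply gC2) ∘ₗ (MonoidAlgebra.coeffLinearEquiv k).toLinearMap))) ∘ₗ LinearMap.snd k k k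


lemma gC2_sq : (gC2 * gC2 : C2) = 1 := by decide

lemma gC2_ne_one : gC2 ≠ (1 : C2) := by decide

lemma one_ne_gC2 : (1 : C2) ≠ gC2 := by decide

lemma psi_xStar_eq :
    psiAct (xStar (k := k)) = (MonoidAlgebra.lsingle gC2) ∘ₗ ((Finsupp.lapply gC2) ∘ₗ (MonoidAlgebra.coeffLinearEquiv k).toLinearMap) := by
  simp [psiAct, xStar, LinearMap.add_apply, LinearMap.comp_apply,
    LinearMap.toSpanSingleton_apply]

lemma decompC2 (a : MonoidAlgebra k C2) :
    a = MonoidAlgebra.single 1 (a.coeff 1) + MonoidAlgebra.single gC2 (a.coeff gC2) := by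
  ext x
  have hx : x = 1 ∨ x = gC2 := by revert x; decide
  rcases hx with h | h <;> subst h <;>
    rw [MonoidAlgebra.coeff_add, Finsupp.add_apply] <;> simp [MonoidAlgebra.coeff_single, Finsupp.single_apply, gC2_ne_one, one_ne_gC2]

/-- In characteristic 2, `x*` is a primitive element of the universal acting Hopf algebra
of `k[C₂]`: `δ(x*) = 1̂ ⊗ x* + x* ⊗ 1̂` where `1̂ = 1* + x*` is the unit grouplike.
Consequently `a ↦ ψ(x* ⊗ a)` is a nonzero derivation of the Frobenius algebra `k[C₂]`
which is not induced by any algebra automorphism. -/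
theorem char2_primitive_derivation [CharP k 2] :
    (deltaDual (xStar (k := k))
      = (oneStar + xStar) ⊗ₜ[k] xStar + xStar ⊗ₜ[k] (oneStar + xStar)) ∧
    (psiAct (xStar (k := k)) ≠ 0) ∧
    (∀ a b : MonoidAlgebra k C2,
      psiAct (xStar (k := k)) (a * b)
        = psiAct (xStar (k := k)) a * b + a * psiAct (xStar (k := k)) b) ∧
    (∀ f : MonoidAlgebra k C2 ≃ₐ[k] MonoidAlgebra k C2,
      ⇑(psiAct (xStar (k := k))) ≠ ⇑f) := by
  have hpsi : ∀ a : MonoidAlgebra k C2,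
      psiAct (xStar (k := k)) a = MonoidAlgebra.single gC2 (a.coeff gC2) := by
    intro a; rw [psi_xStar_eq]; rfl
  refine ⟨?_, ?_, ?_, ?_⟩
  · have h2 : (xStar ⊗ₜ[k] xStar : DualC (k := k) ⊗[k] DualC (k := k))
        + xStar ⊗ₜ[k] xStar = 0 := by
      rw [← two_smul k]
      have : (2 : k) = 0 := by
        simpa using (CharP.cast_eq_zero k 2)
      rw [this, zero_smul]
    simp only [deltaDual, xStar, LinearMap.add_apply, LinearMap.comp_apply,
      LinearMap.fst_apply, LinearMap.snd_apply, LinearMap.toSpanSingleton_apply,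
      zero_smul, one_smul, zero_add, add_tmul, tmul_add]
    rw [show ((0,1) : DualC (k := k)) = xStar from rfl]
    rw [show (oneStar ⊗ₜ[k] xStar + xStar ⊗ₜ[k] xStar + (xStar ⊗ₜ[k] oneStar + xStar ⊗ₜ[k] xStar) : DualC (k := k) ⊗[k] DualC (k := k)) = xStar ⊗ₜ[k] oneStar + oneStar ⊗ₜ[k] xStar + (xStar ⊗ₜ[k] xStar + xStar ⊗ₜ[k] xStar) by abel]
    rw [h2, add_zero]
  · intro h
    have := congrArg (fun F => F (MonoidAlgebra.single gC2 (1 : k))) h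
    simp [hpsi, MonoidAlgebra.coeff_single, Finsupp.single_apply] at this
  · intro a b
    obtain ⟨p, q, ha⟩ : ∃ p q, a = MonoidAlgebra.single (1 : C2) p + MonoidAlgebra.single gC2 q :=
      ⟨_, _, decompC2 a⟩
    obtain ⟨r, s, hb⟩ : ∃ r s, b = MonoidAlgebra.single (1 : C2) r + MonoidAlgebra.single gC2 s :=
      ⟨_, _, decompC2 b⟩
    subst ha hb
    have hD0 : ∀ c : k, psiAct (xStar (k := k)) (MonoidAlgebra.single (1 : C2) c) = 0 := by
      intro c; rw [hpsi]; simp [MonoidAlgebra.coeff_single, Finsupp.single_apply, one_ne_gC2]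
    have hDg : ∀ c : k,
        psiAct (xStar (k := k)) (MonoidAlgebra.single gC2 c) = MonoidAlgebra.single gC2 c := by
      intro c; rw [hpsi]; simp [MonoidAlgebra.coeff_single]
    simp only [mul_add, add_mul, MonoidAlgebra.single_mul_single, one_mul, mul_one,
      gC2_sq, map_add, hD0, hDg, zero_add, add_zero, zero_mul, mul_zero]
    have hqs : (MonoidAlgebra.single (1 : C2) (q * s) : MonoidAlgebra k C2)
        + MonoidAlgebra.single (1 : C2) (q * s) = 0 := by
      rw [← MonoidAlgebra.single_add, CharTwo.add_self_eq_zero, MonoidAlgebra.single_zero]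
    linear_combination -hqs
  · intro f h
    have h1 : psiAct (xStar (k := k)) (1 : MonoidAlgebra k C2) = 0 := by
      rw [hpsi]
      rw [MonoidAlgebra.one_def]
      simp [MonoidAlgebra.coeff_single, Finsupp.single_apply, one_ne_gC2]
    have : (1 : MonoidAlgebra k C2) = 0 := by
      have := congrFun h 1
      rw [h1, map_one] at this
      exact this.symm
    exact one_ne_zero this


end Char2
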